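/- Let h^+_k(z) = |z|^k for |z| ≤ 1 and h^+_k(z) = |z|^{-1/2} e^{Re z} for |z| > 1. Suppose V ∈ L^∞[0, r_0] is continuous near r_0 with V(t) ~ κ(r_0 − t)^{σ−1} as t → r_0 for some σ ≥ 1, κ ≠ 0. Then for each ε > 0 and k ≥ 0 there exist constants C, N such that for θ ∈ (−π/2+ε, π/2−ε) and a ≥ N, ∫_{1/a}^{r_0} h^+_k(t a e^{iθ})² |V(t)| sinh t dt ≤ (C/a)(a cos θ)^{−σ} e^{2 r_0 a cos θ}. -/

import Mathlib

open Set Filter MeasureTheory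


lemma integrableOn_of_bdd {f : ℝ → ℝ} {u v c : ℝ} (hf : Measurable f)
    (h : ∀ t ∈ Ioo u v, |f t| ≤ c) : IntegrableOn f (Ioo u v) := by
  refine Integrable.mono' (g := fun _ => c)
    (integrableOn_const measure_Ioo_lt_top.ne) hf.aestronglyMeasurable.restrict ?_
  exact (ae_restrict_iff' measurableSet_Ioo).2
    (ae_of_all _ fun t ht => by simpa [Real.norm_eq_abs] using h t ht)

lemma exists_rpow_mul_exp_le (p : ℝ) {c : ℝ} (hc : 0 < c) :
    ∃ K : ℝ, 0 ≤ K ∧ ∀ x : ℝ, 1 ≤ x → x ^ p * Real.exp (-(c * x)) ≤ K := by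
  refine ⟨(Nat.ceil p).factorial / c ^ (Nat.ceil p), by positivity, fun x hx => ?_⟩
  set n := Nat.ceil p with hn
  have hx0 : (0 : ℝ) < x := lt_of_lt_of_le one_pos hx
  have h1 : x ^ p ≤ x ^ (n : ℝ) := Real.rpow_le_rpow_of_exponent_le hx (Nat.le_ceil p)
  have h2 : (c * x) ^ n / (n).factorial ≤ Real.exp (c * x) :=
    Real.pow_div_factorial_le_exp (x := c * x) (mul_nonneg hc.le hx0.le) n
  have h3 : x ^ n ≤ (n).factorial / c ^ n * Real.exp (c * x) := by
    have hcn : (0:ℝ) < c ^ n := by positivity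
    have hfn : (0:ℝ) < ((n).factorial : ℝ) := by positivity
    rw [div_le_iff₀ hfn, mul_pow] at h2
    rw [div_mul_eq_mul_div, le_div_iff₀ hcn]
    nlinarith [h2]
  have h4 : x ^ (n : ℝ) = x ^ n := Real.rpow_natCast x n
  calc x ^ p * Real.exp (-(c * x)) ≤ x ^ n * Real.exp (-(c * x)) := by
        rw [← h4]; exact mul_le_mul_of_nonneg_right h1 (Real.exp_pos _).le
    _ ≤ ((n).factorial / c ^ n * Real.exp (c * x)) * Real.exp (-(c * x)) :=
        mul_le_mul_of_nonneg_right h3 (Real.exp_pos _).le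
    _ = (n).factorial / c ^ n := by rw [mul_assoc, ← Real.exp_add]; simp

/-- `h⁺_k(z) = |z|^k` for `|z| ≤ 1` and `|z|^{-1/2} e^{Re z}` for `|z| > 1`. -/
noncomputable def hplus (k : ℝ) (z : ℂ) : ℝ :=
  if ‖z‖ ≤ 1 then (‖z‖) ^ k
  else (‖z‖) ^ (-(1 : ℝ) / 2) * Real.exp z.re

set_option maxHeartbeats 1000000 in
/-- Low-frequency integral estimate -/
theorem low_frequency_integral_estimate
    (r₀ : ℝ) (hr₀ : 0 < r₀) (V : ℝ → ℂ) (hV_meas : Measurable V)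
    (M : ℝ) (hV_bd : ∀ t ∈ Icc (0:ℝ) r₀, ‖V t‖ ≤ M)
    (δ : ℝ) (hδ : 0 < δ) (hV_cont : ContinuousOn V (Icc (r₀ - δ) r₀))
    (κ : ℂ) (hκ : κ ≠ 0) (σ : ℝ) (hσ : 1 ≤ σ)
    (hV_asymp : Tendsto (fun t : ℝ => V t / (κ * ((r₀ - t : ℝ) : ℂ) ^ ((σ - 1 : ℝ) : ℂ)))
      (nhdsWithin r₀ (Iio r₀)) (nhds 1))
    (ε : ℝ) (hε : 0 < ε) (k : ℝ) (hk : 0 ≤ k) :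
    ∃ C N : ℝ, ∀ θ : ℝ, |θ| < Real.pi / 2 - ε → ∀ a : ℝ, N ≤ a →
      ∫ t in (1/a)..r₀,
          (hplus k ((t : ℂ) * (a : ℂ) * Complex.exp (θ * Complex.I))) ^ 2
            * ‖V t‖ * Real.sinh t
        ≤ C / a * (a * Real.cos θ) ^ (-σ) * Real.exp (2 * r₀ * a * Real.cos θ) := by
  rcases le_or_gt (Real.pi / 2) ε with hεπ | hεπ
  · exact ⟨0, 0, fun θ hθ => absurd hθ (not_lt.2 (by linarith [abs_nonneg θ]))⟩
  have hM0 : 0 ≤ M := le_trans (norm_nonneg (V 0)) (hV_bd 0 ⟨le_refl 0, hr₀.le⟩)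
  have hS0 : 0 ≤ Real.sinh r₀ := Real.sinh_nonneg_iff.2 hr₀.le
  have hs0 : 0 < Real.sin ε := Real.sin_pos_of_pos_of_lt_pi hε (by linarith [Real.pi_pos])
  have hs1 : Real.sin ε ≤ 1 := Real.sin_le_one ε
  -- extract near-r₀ bound on V
  have hev : ∀ᶠ t in nhdsWithin r₀ (Iio r₀),
      ‖V t / (κ * ((r₀ - t : ℝ) : ℂ) ^ ((σ - 1 : ℝ) : ℂ))‖ < 2 := by
    have h1 := hV_asymp.norm
    rw [norm_one] at h1
    exact h1.eventually_lt_const one_lt_two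
  obtain ⟨l, hl, hsub⟩ := mem_nhdsLT_iff_exists_Ioo_subset.1 hev
  set t₁ : ℝ := max l (r₀ / 2) with ht₁def
  have ht₁r : t₁ < r₀ := max_lt hl (by linarith)
  have ht₁0 : 0 < t₁ := lt_of_lt_of_le (by linarith) (le_max_right _ _)
  have hVnear : ∀ t ∈ Ioo t₁ r₀, ‖V t‖ ≤ 2 * (‖κ‖ * (r₀ - t) ^ (σ - 1)) := by
    intro t ht
    have h2 : ‖V t / (κ * ((r₀ - t : ℝ) : ℂ) ^ ((σ - 1 : ℝ) : ℂ))‖ < 2 :=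
      hsub ⟨lt_of_le_of_lt (le_max_left _ _) ht.1, ht.2⟩
    have hrt : 0 < r₀ - t := by linarith [ht.2]
    have hDabs : ‖κ * ((r₀ - t : ℝ) : ℂ) ^ ((σ - 1 : ℝ) : ℂ)‖ = ‖κ‖ * (r₀ - t) ^ (σ - 1) := by
      rw [norm_mul]
      congr 1
      rw [Complex.norm_cpow_eq_rpow_re_of_pos hrt, Complex.ofReal_re]
    have hDpos : 0 < ‖κ * ((r₀ - t : ℝ) : ℂ) ^ ((σ - 1 : ℝ) : ℂ)‖ := by
      rw [hDabs]
      exact mul_pos (norm_pos_iff.2 hκ) (Real.rpow_pos_of_pos hrt _)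
    rw [norm_div] at h2
    rw [div_lt_iff₀ hDpos] at h2
    rw [← hDabs]
    nlinarith [h2, hDpos]
  obtain ⟨K, hK0, hKle⟩ := exists_rpow_mul_exp_le (σ + 1) (c := 2 * (r₀ - t₁)) (by linarith)
  have hGam : 0 ≤ Real.Gamma σ := Real.Gamma_nonneg_of_nonneg (by linarith)
  refine ⟨r₀ * M * Real.sinh r₀ * K / Real.sin ε + 2 * ‖κ‖ * Real.sinh r₀ * Real.Gamma σ / t₁,
    max (2 / (t₁ * Real.sin ε)) (2 / Real.sin ε), ?_⟩
  intro θ hθ a ha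
  have hcos : Real.sin ε ≤ Real.cos θ := by
    have h1 : Real.cos (Real.pi / 2 - ε) ≤ Real.cos |θ| :=
      Real.cos_le_cos_of_nonneg_of_le_pi (abs_nonneg θ) (by linarith [Real.pi_pos]) hθ.le
    rwa [Real.cos_pi_div_two_sub, Real.cos_abs] at h1
  have ha0 : 0 < a := lt_of_lt_of_le (lt_of_lt_of_le (div_pos two_pos hs0) (le_max_right _ _)) ha
  have hcos0 : 0 < Real.cos θ := lt_of_lt_of_le hs0 hcos
  set x : ℝ := a * Real.cos θ with hxdef
  have hx2 : 2 ≤ x := by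
    have h1 : 2 / Real.sin ε ≤ a := le_trans (le_max_right _ _) ha
    rw [div_le_iff₀ hs0] at h1
    calc (2:ℝ) ≤ a * Real.sin ε := by linarith
      _ ≤ a * Real.cos θ := mul_le_mul_of_nonneg_left hcos ha0.le
  have hx1 : 1 ≤ x := by linarith
  have hx0 : 0 < x := by linarith
  have hsa : Real.sin ε * a ≤ x := by
    rw [hxdef, mul_comm (Real.sin ε) a]
    exact mul_le_mul_of_nonneg_left hcos ha0.le
  have ht₁a : 2 ≤ t₁ * a := by
    have h1 : 2 / (t₁ * Real.sin ε) ≤ a := le_trans (le_max_left _ _) ha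
    rw [div_le_iff₀ (mul_pos ht₁0 hs0)] at h1
    nlinarith [mul_nonneg ht₁0.le ha0.le]
  have hia : 1 / a ≤ t₁ := by
    rw [div_le_iff₀ ha0]
    linarith
  have hiar : 1 / a ≤ r₀ := le_trans hia ht₁r.le
  set B : ℝ := 2 * x with hBdef
  have hB0 : 0 < B := by rw [hBdef]; linarith
  set A₁ : ℝ := M * Real.sinh r₀ * Real.exp (t₁ * B) with hA₁def
  set A₂ : ℝ := 2 * ‖κ‖ * Real.sinh r₀ / (t₁ * a) with hA₂def
  have hA₁0 : 0 ≤ A₁ := mul_nonneg (mul_nonneg hM0 hS0) (Real.exp_pos _).le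
  have hA₂0 : 0 ≤ A₂ := div_nonneg (by positivity) (mul_nonneg ht₁0.le ha0.le)
  -- square of hplus on the domain
  have hsq : ∀ t ∈ Ioo (1/a) r₀,
      (hplus k ((t : ℂ) * (a : ℂ) * Complex.exp (θ * Complex.I))) ^ 2
        = (t * a)⁻¹ * Real.exp (t * B) := by
    intro t ht
    have ht0 : 0 < t := lt_trans (by positivity) ht.1
    have hta : 1 < t * a := by
      have := ht.1
      rw [div_lt_iff₀ ha0] at this
      linarith
    have habs : ‖(t : ℂ) * (a : ℂ) * Complex.exp (θ * Complex.I)‖ = t * a := by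
      rw [norm_mul, norm_mul, Complex.norm_real, Complex.norm_real,
        Complex.norm_exp_ofReal_mul_I, mul_one, Real.norm_eq_abs, Real.norm_eq_abs, abs_of_pos ht0, abs_of_pos ha0]
    have hre : ((t : ℂ) * (a : ℂ) * Complex.exp (θ * Complex.I)).re = t * a * Real.cos θ := by
      rw [show ((t:ℂ) * (a:ℂ) * Complex.exp (θ * Complex.I))
          = ((t * a : ℝ) : ℂ) * Complex.exp ((θ:ℝ) * Complex.I) by push_cast; ring,
        Complex.re_ofReal_mul, Complex.exp_ofReal_mul_I_re]
    unfold hplus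
    rw [habs, hre, if_neg (not_le.2 hta)]
    have e1 : ((t * a) ^ (-(1:ℝ) / 2)) ^ 2 = (t * a)⁻¹ := by
      rw [sq, ← Real.rpow_add (by positivity : (0:ℝ) < t * a)]
      norm_num [Real.rpow_neg_one]
    have e2 : (Real.exp (t * a * Real.cos θ)) ^ 2 = Real.exp (t * B) := by
      rw [sq, ← Real.exp_add]
      congr 1
      rw [hBdef, hxdef]; ring
    rw [mul_pow, e1, e2]
  -- pointwise bound
  have key : ∀ t ∈ Ioo (1/a) r₀,
      (hplus k ((t : ℂ) * (a : ℂ) * Complex.exp (θ * Complex.I))) ^ 2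
          * ‖V t‖ * Real.sinh t
        ≤ A₁ + A₂ * ((r₀ - t) ^ (σ - 1) * Real.exp (t * B)) := by
    intro t ht
    obtain ⟨ht1, ht2⟩ := ht
    have ht0 : 0 < t := lt_trans (by positivity) ht1
    have hta : 1 < t * a := by
      have := ht1; rw [div_lt_iff₀ ha0] at this; linarith
    have hst : Real.sinh t ≤ Real.sinh r₀ := Real.sinh_le_sinh.2 ht2.le
    have hst0 : 0 ≤ Real.sinh t := Real.sinh_nonneg_iff.2 ht0.le
    rw [hsq t ⟨ht1, ht2⟩]
    have hφ0 : 0 ≤ (r₀ - t) ^ (σ - 1) * Real.exp (t * B) :=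
      mul_nonneg (Real.rpow_nonneg (by linarith) _) (Real.exp_pos _).le
    rcases le_or_gt t t₁ with hfar | hnear
    · have h1 : (t * a)⁻¹ ≤ 1 := by
        rw [← one_div, div_le_one (by linarith)]; linarith
      have h2 : Real.exp (t * B) ≤ Real.exp (t₁ * B) :=
        Real.exp_le_exp.2 (mul_le_mul_of_nonneg_right hfar hB0.le)
      have h3 : ‖V t‖ ≤ M := hV_bd t ⟨ht0.le, ht2.le⟩
      have h4 : (t * a)⁻¹ * Real.exp (t * B) * ‖V t‖ * Real.sinh t
          ≤ 1 * Real.exp (t₁ * B) * M * Real.sinh r₀ :=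
        mul_le_mul (mul_le_mul (mul_le_mul h1 h2 (Real.exp_pos _).le zero_le_one) h3
          (norm_nonneg _) (by positivity)) hst hst0
          (mul_nonneg (by positivity) hM0)
      have h5 : (1:ℝ) * Real.exp (t₁ * B) * M * Real.sinh r₀ = A₁ := by
        rw [hA₁def]; ring
      nlinarith [mul_nonneg hA₂0 hφ0]
    · have hVt : ‖V t‖ ≤ 2 * (‖κ‖ * (r₀ - t) ^ (σ - 1)) := hVnear t ⟨hnear, ht2⟩
      have h1 : (t * a)⁻¹ ≤ (t₁ * a)⁻¹ := by
        rw [← one_div, ← one_div]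
        exact one_div_le_one_div_of_le (mul_pos ht₁0 ha0)
          (mul_le_mul_of_nonneg_right hnear.le ha0.le)
      have hw : 0 ≤ (r₀ - t) ^ (σ - 1) := Real.rpow_nonneg (by linarith) _
      have hi1 : (0:ℝ) ≤ (t₁ * a)⁻¹ * Real.exp (t * B) :=
        mul_nonneg (inv_nonneg.2 (mul_nonneg ht₁0.le ha0.le)) (Real.exp_pos _).le
      have h4 : (t * a)⁻¹ * Real.exp (t * B) * ‖V t‖ * Real.sinh t
          ≤ (t₁ * a)⁻¹ * Real.exp (t * B) * (2 * (‖κ‖ * (r₀ - t) ^ (σ - 1))) * Real.sinh r₀ :=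
        mul_le_mul (mul_le_mul (mul_le_mul_of_nonneg_right h1 (Real.exp_pos _).le) hVt
          (norm_nonneg _) hi1) hst hst0
          (mul_nonneg hi1 (mul_nonneg zero_le_two (mul_nonneg (norm_nonneg _) hw)))
      have h5 : (t₁ * a)⁻¹ * Real.exp (t * B) * (2 * (‖κ‖ * (r₀ - t) ^ (σ - 1))) * Real.sinh r₀
          = A₂ * ((r₀ - t) ^ (σ - 1) * Real.exp (t * B)) := by
        rw [hA₂def]
        ring
      linarith [h4, h5.symm.le, hA₁0]
  -- integrability
  have hφcont : Continuous (fun t : ℝ => (r₀ - t) ^ (σ - 1) * Real.exp (t * B)) := by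
    apply Continuous.mul
    · exact (Real.continuous_rpow_const (by linarith)).comp (continuous_const.sub continuous_id)
    · exact Real.continuous_exp.comp (continuous_id.mul continuous_const)
  have hφint : IntegrableOn (fun t : ℝ => (r₀ - t) ^ (σ - 1) * Real.exp (t * B))
      (Ioo (1/a) r₀) :=
    (hφcont.integrableOn_Icc).mono_set Ioo_subset_Icc_self
  have hFmeas : Measurable (fun t : ℝ => (t * a)⁻¹ * Real.exp (t * B) * ‖V t‖ * Real.sinh t) := by
    exact (((measurable_id.mul_const a).inv.mul
      ((measurable_id.mul_const B).exp)).mul hV_meas.norm).mul Real.continuous_sinh.measurable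
  have hFbd : ∀ t ∈ Ioo (1/a) r₀,
      |(t * a)⁻¹ * Real.exp (t * B) * ‖V t‖ * Real.sinh t| ≤ M * Real.sinh r₀ * Real.exp (r₀ * B) := by
    intro t ht
    obtain ⟨ht1, ht2⟩ := ht
    have ht0 : 0 < t := lt_trans (by positivity) ht1
    have hta : 1 < t * a := by
      have := ht1; rw [div_lt_iff₀ ha0] at this; linarith
    have hst : Real.sinh t ≤ Real.sinh r₀ := Real.sinh_le_sinh.2 ht2.le
    have hst0 : 0 ≤ Real.sinh t := Real.sinh_nonneg_iff.2 ht0.le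
    have h1 : (t * a)⁻¹ ≤ 1 := by
      rw [← one_div, div_le_one (by linarith)]; linarith
    have h2 : Real.exp (t * B) ≤ Real.exp (r₀ * B) :=
      Real.exp_le_exp.2 (mul_le_mul_of_nonneg_right ht2.le hB0.le)
    have h3 : ‖V t‖ ≤ M := hV_bd t ⟨ht0.le, ht2.le⟩
    rw [abs_of_nonneg (by positivity)]
    have h4 : (t * a)⁻¹ * Real.exp (t * B) * ‖V t‖ * Real.sinh t
        ≤ 1 * Real.exp (r₀ * B) * M * Real.sinh r₀ :=
      mul_le_mul (mul_le_mul (mul_le_mul h1 h2 (Real.exp_pos _).le zero_le_one) h3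
        (norm_nonneg _) (by positivity)) hst hst0
        (mul_nonneg (by positivity) hM0)
    linarith [h4]
  have hFint : IntegrableOn (fun t : ℝ => (t * a)⁻¹ * Real.exp (t * B) * ‖V t‖ * Real.sinh t)
      (Ioo (1/a) r₀) := integrableOn_of_bdd hFmeas hFbd
  have hfint : IntegrableOn (fun t : ℝ =>
      (hplus k ((t : ℂ) * (a : ℂ) * Complex.exp (θ * Complex.I))) ^ 2
        * ‖V t‖ * Real.sinh t) (Ioo (1/a) r₀) := by
    apply hFint.congr_fun _ measurableSet_Ioo
    intro t ht
    show (t * a)⁻¹ * Real.exp (t * B) * ‖V t‖ * Real.sinh t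
      = (hplus k ((t : ℂ) * (a : ℂ) * Complex.exp (θ * Complex.I))) ^ 2 * ‖V t‖ * Real.sinh t
    rw [hsq t ht]
  have hconst : IntegrableOn (fun _ : ℝ => A₁) (Ioo (1/a) r₀) :=
    integrableOn_const measure_Ioo_lt_top.ne
  have hgint : IntegrableOn (fun t : ℝ => A₁ + A₂ * ((r₀ - t) ^ (σ - 1) * Real.exp (t * B)))
      (Ioo (1/a) r₀) := hconst.add (hφint.const_mul A₂)
  -- bound the φ integral by the Gamma integral
  have hψint : IntegrableOn (fun s : ℝ => s ^ (σ - 1) * Real.exp (-(B * s))) (Ioi 0) := by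
    have := integrableOn_rpow_mul_exp_neg_mul_rpow (s := σ - 1) (p := 1) (b := B)
      (by linarith) one_pos hB0
    simpa [Real.rpow_one, neg_mul] using this
  have hint2 : ∫ t in Ioo (1/a) r₀, (r₀ - t) ^ (σ - 1) * Real.exp (t * B)
      ≤ Real.exp (r₀ * B) * ((1 / B) ^ σ * Real.Gamma σ) := by
    rw [← MeasureTheory.integral_Ioc_eq_integral_Ioo,
      ← intervalIntegral.integral_of_le hiar]
    have hrw : ∀ t : ℝ, (r₀ - t) ^ (σ - 1) * Real.exp (t * B)
        = Real.exp (r₀ * B) * ((r₀ - t) ^ (σ - 1) * Real.exp (-(B * (r₀ - t)))) := by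
      intro t
      rw [show t * B = r₀ * B + -(B * (r₀ - t)) by ring, Real.exp_add]
      ring
    simp_rw [hrw]
    rw [intervalIntegral.integral_const_mul]
    apply mul_le_mul_of_nonneg_left _ (Real.exp_pos _).le
    have hcomp := intervalIntegral.integral_comp_sub_left
      (a := 1/a) (b := r₀) (fun s : ℝ => s ^ (σ - 1) * Real.exp (-(B * s))) r₀
    rw [hcomp, sub_self, intervalIntegral.integral_of_le (by linarith : (0:ℝ) ≤ r₀ - 1/a)]
    calc ∫ s in Ioc 0 (r₀ - 1/a), s ^ (σ - 1) * Real.exp (-(B * s))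
        ≤ ∫ s in Ioi 0, s ^ (σ - 1) * Real.exp (-(B * s)) := by
          apply setIntegral_mono_set hψint
          · filter_upwards [self_mem_ae_restrict (measurableSet_Ioi : MeasurableSet (Ioi (0:ℝ)))]
              with y hy
            exact mul_nonneg (Real.rpow_nonneg (le_of_lt hy) _) (Real.exp_pos _).le
          · exact HasSubset.Subset.eventuallyLE Ioc_subset_Ioi_self
      _ = (1 / B) ^ σ * Real.Gamma σ :=
          Real.integral_rpow_mul_exp_neg_mul_Ioi (by linarith) hB0
  -- main chain
  have hchain : ∫ t in (1/a)..r₀,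
      (hplus k ((t : ℂ) * (a : ℂ) * Complex.exp (θ * Complex.I))) ^ 2
        * ‖V t‖ * Real.sinh t
      ≤ A₁ * r₀ + A₂ * (Real.exp (r₀ * B) * ((1 / B) ^ σ * Real.Gamma σ)) := by
    rw [intervalIntegral.integral_of_le hiar, MeasureTheory.integral_Ioc_eq_integral_Ioo]
    calc ∫ t in Ioo (1/a) r₀,
        (hplus k ((t : ℂ) * (a : ℂ) * Complex.exp (θ * Complex.I))) ^ 2
          * ‖V t‖ * Real.sinh t
        ≤ ∫ t in Ioo (1/a) r₀, (A₁ + A₂ * ((r₀ - t) ^ (σ - 1) * Real.exp (t * B))) :=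
          setIntegral_mono_on hfint hgint measurableSet_Ioo key
      _ = A₁ * (r₀ - 1/a) + A₂ * ∫ t in Ioo (1/a) r₀, (r₀ - t) ^ (σ - 1) * Real.exp (t * B) := by
          rw [MeasureTheory.integral_add hconst (hφint.const_mul A₂),
            MeasureTheory.setIntegral_const,
            Real.volume_real_Ioo_of_le (by linarith : 1/a ≤ r₀),
            smul_eq_mul, MeasureTheory.integral_const_mul]
          ring
      _ ≤ A₁ * r₀ + A₂ * (Real.exp (r₀ * B) * ((1 / B) ^ σ * Real.Gamma σ)) := by
          have h1 : A₁ * (r₀ - 1/a) ≤ A₁ * r₀ :=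
            mul_le_mul_of_nonneg_left (by linarith [one_div_pos.mpr ha0]) hA₁0
          have h2 := mul_le_mul_of_nonneg_left hint2 hA₂0
          linarith
  refine le_trans hchain ?_
  -- final numeric estimate
  have hexp : Real.exp (2 * r₀ * a * Real.cos θ) = Real.exp (r₀ * B) := by
    congr 1
    rw [hBdef, hxdef]; ring
  have hxσ : (0:ℝ) < x ^ σ := Real.rpow_pos_of_pos hx0 σ
  have hxneg : (a * Real.cos θ) ^ (-σ) = (x ^ σ)⁻¹ := by
    rw [← hxdef, Real.rpow_neg hx0.le]
  rw [hexp, hxneg]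
  have P1 : A₁ * r₀ ≤ r₀ * M * Real.sinh r₀ * K / Real.sin ε / a * (x ^ σ)⁻¹
      * Real.exp (r₀ * B) := by
    have e1 : Real.exp (t₁ * B) = Real.exp (r₀ * B) * Real.exp (-(2 * (r₀ - t₁) * x)) := by
      rw [← Real.exp_add]
      congr 1
      rw [hBdef]; ring
    have hKx : x ^ (σ + 1) * Real.exp (-(2 * (r₀ - t₁) * x)) ≤ K := hKle x hx1
    have hL0 : 0 ≤ r₀ * M * Real.sinh r₀ := mul_nonneg (mul_nonneg hr₀.le hM0) hS0
    have main : r₀ * M * Real.sinh r₀ * Real.exp (-(2 * (r₀ - t₁) * x))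
        ≤ r₀ * M * Real.sinh r₀ * K / Real.sin ε / a * (x ^ σ)⁻¹ := by
      have hrhs : r₀ * M * Real.sinh r₀ * K / Real.sin ε / a * (x ^ σ)⁻¹
          = (r₀ * M * Real.sinh r₀ * K) / (Real.sin ε * a * x ^ σ) := by
        rw [div_div, ← div_eq_mul_inv, div_div]
      rw [hrhs, le_div_iff₀ (by positivity : (0:ℝ) < Real.sin ε * a * x ^ σ)]
      have h1 : Real.sin ε * a * x ^ σ ≤ x ^ (σ + 1) := by
        rw [Real.rpow_add hx0, Real.rpow_one]
        calc Real.sin ε * a * x ^ σ ≤ x * x ^ σ :=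
            mul_le_mul_of_nonneg_right hsa hxσ.le
          _ = x ^ σ * x := mul_comm _ _
      nlinarith [mul_le_mul_of_nonneg_left h1
          (mul_nonneg hL0 (Real.exp_pos (-(2 * (r₀ - t₁) * x))).le),
        mul_le_mul_of_nonneg_left hKx hL0]
    calc A₁ * r₀ = (r₀ * M * Real.sinh r₀ * Real.exp (-(2 * (r₀ - t₁) * x)))
        * Real.exp (r₀ * B) := by rw [hA₁def, e1]; ring
      _ ≤ (r₀ * M * Real.sinh r₀ * K / Real.sin ε / a * (x ^ σ)⁻¹) * Real.exp (r₀ * B) :=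
          mul_le_mul_of_nonneg_right main (Real.exp_pos _).le
  have P2 : A₂ * (Real.exp (r₀ * B) * ((1 / B) ^ σ * Real.Gamma σ))
      ≤ 2 * ‖κ‖ * Real.sinh r₀ * Real.Gamma σ / t₁ / a * (x ^ σ)⁻¹ * Real.exp (r₀ * B) := by
    have hBσ : (1 / B) ^ σ ≤ (x ^ σ)⁻¹ := by
      rw [← Real.inv_rpow hx0.le]
      apply Real.rpow_le_rpow (by positivity) _ (by linarith : (0:ℝ) ≤ σ)
      rw [inv_eq_one_div]
      apply one_div_le_one_div_of_le hx0
      rw [hBdef]; linarith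
    have h1 : A₂ * (Real.exp (r₀ * B) * ((1 / B) ^ σ * Real.Gamma σ))
        ≤ A₂ * (Real.exp (r₀ * B) * ((x ^ σ)⁻¹ * Real.Gamma σ)) := by
      apply mul_le_mul_of_nonneg_left _ hA₂0
      apply mul_le_mul_of_nonneg_left _ (Real.exp_pos _).le
      exact mul_le_mul_of_nonneg_right hBσ hGam
    have h2 : A₂ * (Real.exp (r₀ * B) * ((x ^ σ)⁻¹ * Real.Gamma σ))
        = 2 * ‖κ‖ * Real.sinh r₀ * Real.Gamma σ / t₁ / a * (x ^ σ)⁻¹ * Real.exp (r₀ * B) := by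
      rw [hA₂def]
      ring
    linarith
  have hfin : (r₀ * M * Real.sinh r₀ * K / Real.sin ε
        + 2 * ‖κ‖ * Real.sinh r₀ * Real.Gamma σ / t₁) / a * (x ^ σ)⁻¹ * Real.exp (r₀ * B)
      = r₀ * M * Real.sinh r₀ * K / Real.sin ε / a * (x ^ σ)⁻¹ * Real.exp (r₀ * B)
        + 2 * ‖κ‖ * Real.sinh r₀ * Real.Gamma σ / t₁ / a * (x ^ σ)⁻¹ * Real.exp (r₀ * B) := by
    ring
  rw [hfin]
  linarith [P1, P2]
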